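/- Let P ⊂ l∞^n be a convex polyhedron with nonempty interior. Then P is injective if and only if every tangent cone T_pP (p ∈ P) that is minimal with respect to inclusion among all tangent cones of P is injective. -/

import Mathlib

open Set Metric

/-- A metric space `X` is *injective* if for all metric spaces `A`, `B`, every isometric
embedding `i : A → B` and every `1`-Lipschitz map `f : A → X`, there is a `1`-Lipschitz
map `g : B → X` with `g ∘ i = f`. -/
def IsInjectiveMetricSpace (X : Type) [MetricSpace X] : Prop :=
  ∀ (A B : Type) [MetricSpace A] [MetricSpace B], ∀ (i : A → B) (f : A → X),
    Isometry i → LipschitzWith 1 f →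
      ∃ g : B → X, LipschitzWith 1 g ∧ ∀ a, g (i a) = f a

/-- A subset of `l∞ⁿ = (Fin n → ℝ)` (whose product metric is the sup-metric) is injective
if it is an injective metric space with the induced metric. -/
def IsInjectiveSubset {n : ℕ} (S : Set (Fin n → ℝ)) : Prop :=
  IsInjectiveMetricSpace S

/-- A convex polyhedron in `ℝⁿ` is a finite intersection of closed half-spaces. -/
def IsConvexPolyhedron {n : ℕ} (P : Set (Fin n → ℝ)) : Prop :=
  ∃ (m : ℕ) (ν : Fin m → (Fin n → ℝ)) (c : Fin m → ℝ),
    (∀ i, ν i ≠ 0) ∧ P = ⋂ i, {x | c i ≤ ∑ j, ν i j * x j}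

/-- The tangent cone `T_p P = ⋃_{m ∈ ℕ} (p + m (P - p))`. -/
def tangentCone {n : ℕ} (P : Set (Fin n → ℝ)) (p : Fin n → ℝ) : Set (Fin n → ℝ) :=
  ⋃ m : ℕ, (fun x => p + (m : ℝ) • (x - p)) '' P

open Topology Filter

namespace IP

variable {n : ℕ}

/-- linear functional given by coefficient vector -/
def lin (v : Fin n → ℝ) (x : Fin n → ℝ) : ℝ := ∑ j, v j * x j

lemma lin_add (v x y : Fin n → ℝ) : lin v (x + y) = lin v x + lin v y := by
  simp [lin, mul_add, Finset.sum_add_distrib]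

lemma lin_smul (v : Fin n → ℝ) (t : ℝ) (x : Fin n → ℝ) : lin v (t • x) = t * lin v x := by
  simp only [lin, Finset.mul_sum, Pi.smul_apply, smul_eq_mul]
  exact Finset.sum_congr rfl fun j _ => by ring

lemma lin_sub (v x y : Fin n → ℝ) : lin v (x - y) = lin v x - lin v y := by
  simp [lin, mul_sub, Finset.sum_sub_distrib]

lemma isLinearMap_lin (v : Fin n → ℝ) : IsLinearMap ℝ (lin v) :=
  ⟨fun x y => lin_add v x y, fun t x => lin_smul v t x⟩

lemma continuous_lin (v : Fin n → ℝ) : Continuous (lin v) := by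
  unfold lin
  exact continuous_finset_sum _ fun j _ => (continuous_const.mul (continuous_apply j))

lemma lin_dist_le (v : Fin n → ℝ) (x y : Fin n → ℝ) :
    |lin v x - lin v y| ≤ (∑ j, |v j|) * dist x y := by
  rw [← lin_sub]
  calc |lin v (x - y)| ≤ ∑ j, |v j * (x - y) j| := Finset.abs_sum_le_sum_abs _ _
    _ ≤ ∑ j, |v j| * dist x y := by
        refine Finset.sum_le_sum fun j _ => ?_
        rw [abs_mul]
        refine mul_le_mul_of_nonneg_left ?_ (abs_nonneg _)
        have := dist_le_pi_dist x y j
        simpa [Real.dist_eq] using this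
    _ = (∑ j, |v j|) * dist x y := by rw [Finset.sum_mul]

lemma mem_tangentCone_iff {P : Set (Fin n → ℝ)} {p z : Fin n → ℝ} :
    z ∈ tangentCone P p ↔ ∃ m : ℕ, ∃ w ∈ P, z = p + (m : ℝ) • (w - p) := by
  simp [tangentCone, Set.mem_iUnion, Set.mem_image, eq_comm]

lemma subset_tangentCone {P : Set (Fin n → ℝ)} {p : Fin n → ℝ} : P ⊆ tangentCone P p := by
  intro z hz
  exact mem_tangentCone_iff.2 ⟨1, z, hz, by simp⟩

lemma mem_tangentCone_self {P : Set (Fin n → ℝ)} {p : Fin n → ℝ} (hp : p ∈ P) :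
    p ∈ tangentCone P p := subset_tangentCone hp

lemma tangentCone_mono {P Q : Set (Fin n → ℝ)} {p : Fin n → ℝ} (h : P ⊆ Q) :
    tangentCone P p ⊆ tangentCone Q p := by
  intro z hz
  rcases mem_tangentCone_iff.1 hz with ⟨m, w, hw, rfl⟩
  exact mem_tangentCone_iff.2 ⟨m, w, h hw, rfl⟩

end IP

set_option linter.unusedSectionVars false
namespace IP

variable {n : ℕ} {ι : Type} [Fintype ι] {ν : ι → Fin n → ℝ} {c : ι → ℝ}
  {P : Set (Fin n → ℝ)}

lemma mem_rep (hrep : P = ⋂ i, {x | c i ≤ lin (ν i) x}) {x : Fin n → ℝ} :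
    x ∈ P ↔ ∀ i, c i ≤ lin (ν i) x := by
  subst hrep; simp [Set.mem_iInter]

lemma tangentCone_char (hrep : P = ⋂ i, {x | c i ≤ lin (ν i) x}) {p : Fin n → ℝ} (hp : p ∈ P) :
    tangentCone P p = {z | ∀ i, lin (ν i) p = c i → c i ≤ lin (ν i) z} := by
  ext z
  constructor
  · rintro hz i hact
    rcases mem_tangentCone_iff.1 hz with ⟨m, w, hw, rfl⟩
    have hw' : c i ≤ lin (ν i) w := (mem_rep hrep).1 hw i
    rw [lin_add, lin_smul, lin_sub, hact]
    nlinarith [Nat.cast_nonneg (α := ℝ) m]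
  · intro hz
    classical
    set m : ℕ := 1 + Finset.univ.sup (fun i : ι =>
      if c i < lin (ν i) p then
        Nat.ceil ((lin (ν i) p - lin (ν i) z) / (lin (ν i) p - c i)) else 0) with hm
    have hm1 : (1 : ℕ) ≤ m := Nat.le_add_right 1 _
    have hmR : (0 : ℝ) < (m : ℝ) := by exact_mod_cast Nat.lt_of_lt_of_le Nat.zero_lt_one hm1
    set w : Fin n → ℝ := p + (1 / (m : ℝ)) • (z - p) with hwdef
    have hlinw : ∀ i, lin (ν i) w =
        lin (ν i) p + (1 / (m : ℝ)) * (lin (ν i) z - lin (ν i) p) := by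
      intro i; rw [hwdef, lin_add, lin_smul, lin_sub]
    have hwP : w ∈ P := by
      rw [mem_rep hrep]
      intro i
      have hpi : c i ≤ lin (ν i) p := (mem_rep hrep).1 hp i
      rcases eq_or_lt_of_le hpi with hact | hina
      · have hzi : c i ≤ lin (ν i) z := hz i hact.symm
        rw [hlinw i, ← hact]
        have h0 : 0 ≤ 1 / (m:ℝ) * (lin (ν i) z - c i) :=
          mul_nonneg (by positivity) (by linarith)
        linarith
      · -- inactive
        have hsup : Nat.ceil ((lin (ν i) p - lin (ν i) z) / (lin (ν i) p - c i)) ≤ m := by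
          calc Nat.ceil ((lin (ν i) p - lin (ν i) z) / (lin (ν i) p - c i))
              = (if c i < lin (ν i) p then
                  Nat.ceil ((lin (ν i) p - lin (ν i) z) / (lin (ν i) p - c i)) else 0) := by
                rw [if_pos hina]
            _ ≤ Finset.univ.sup (fun i : ι =>
                if c i < lin (ν i) p then
                  Nat.ceil ((lin (ν i) p - lin (ν i) z) / (lin (ν i) p - c i)) else 0) :=
                Finset.le_sup (f := fun i : ι =>
                  if c i < lin (ν i) p then
                    Nat.ceil ((lin (ν i) p - lin (ν i) z) / (lin (ν i) p - c i)) else 0)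
                  (Finset.mem_univ i)
            _ ≤ m := Nat.le_add_left _ 1
        have hratio : (lin (ν i) p - lin (ν i) z) / (lin (ν i) p - c i) ≤ (m : ℝ) :=
          le_trans (Nat.le_ceil _) (by exact_mod_cast hsup)
        have hd : (0:ℝ) < lin (ν i) p - c i := by linarith
        have key : lin (ν i) p - lin (ν i) z ≤ (m:ℝ) * (lin (ν i) p - c i) :=
          (div_le_iff₀ hd).1 hratio
        rw [hlinw i, ← sub_nonneg]
        have heq : lin (ν i) p + 1 / (m:ℝ) * (lin (ν i) z - lin (ν i) p) - c i =
            ((lin (ν i) p - c i) * (m:ℝ) + (lin (ν i) z - lin (ν i) p)) / (m:ℝ) := by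
          field_simp; ring
        rw [heq]
        apply div_nonneg _ (le_of_lt hmR)
        nlinarith
    refine mem_tangentCone_iff.2 ⟨m, w, hwP, ?_⟩
    rw [hwdef]
    ext j
    simp only [Pi.add_apply, Pi.smul_apply, Pi.sub_apply, smul_eq_mul]
    field_simp
    ring

lemma isClosed_rep (hrep : P = ⋂ i, {x | c i ≤ lin (ν i) x}) : IsClosed P := by
  subst hrep
  exact isClosed_iInter fun i => isClosed_le continuous_const (continuous_lin (ν i))

lemma convex_rep (hrep : P = ⋂ i, {x | c i ≤ lin (ν i) x}) : Convex ℝ P := by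
  subst hrep
  exact convex_iInter fun i => convex_halfSpace_ge (isLinearMap_lin (ν i)) (c i)

/-- the tangent cone has a representation indexed by the active constraints -/
lemma tangentCone_rep (hrep : P = ⋂ i, {x | c i ≤ lin (ν i) x}) {p : Fin n → ℝ} (hp : p ∈ P) :
    tangentCone P p =
      ⋂ i : {i : ι // lin (ν i) p = c i}, {x | c i.1 ≤ lin (ν i.1) x} := by
  rw [tangentCone_char hrep hp]
  ext z; simp

lemma isClosed_tangentCone (hrep : P = ⋂ i, {x | c i ≤ lin (ν i) x}) {p : Fin n → ℝ}
    (hp : p ∈ P) : IsClosed (tangentCone P p) :=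
  isClosed_rep (tangentCone_rep hrep hp)

end IP

namespace IP

variable {n : ℕ} {ι : Type} [Fintype ι] {ν : ι → Fin n → ℝ} {c : ι → ℝ}
  {P : Set (Fin n → ℝ)}

/-- near `p`, the tangent cone is contained in `P` -/
lemma exists_eps_tangentCone_subset (hrep : P = ⋂ i, {x | c i ≤ lin (ν i) x})
    {p : Fin n → ℝ} (hp : p ∈ P) :
    ∃ ε > 0, ∀ z ∈ tangentCone P p, dist z p ≤ ε → z ∈ P := by
  classical
  set εf : ι → ℝ := fun i =>
    if lin (ν i) p = c i then 1
    else (lin (ν i) p - c i) / ((∑ j, |ν i j|) + 1) with hεf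
  have hεfpos : ∀ i, 0 < εf i := by
    intro i
    rw [hεf]
    by_cases h : lin (ν i) p = c i
    · simp [h]
    · have h1 : c i ≤ lin (ν i) p := (mem_rep hrep).1 hp i
      have h2 : c i < lin (ν i) p := lt_of_le_of_ne h1 (Ne.symm h)
      have h3 : (0:ℝ) < (∑ j, |ν i j|) + 1 := by
        have : (0:ℝ) ≤ ∑ j, |ν i j| := Finset.sum_nonneg fun j _ => abs_nonneg _
        linarith
      simp only
      rw [if_neg h]
      exact div_pos (by linarith) h3
  set s : Finset ℝ := insert (1:ℝ) (Finset.univ.image εf) with hs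
  have hsne : s.Nonempty := ⟨1, Finset.mem_insert_self _ _⟩
  refine ⟨s.min' hsne, ?_, ?_⟩
  · refine (Finset.lt_min'_iff _ _).2 fun y hy => ?_
    rcases Finset.mem_insert.1 hy with rfl | hy
    · exact one_pos
    · rcases Finset.mem_image.1 hy with ⟨i, _, rfl⟩
      exact hεfpos i
  · intro z hz hdist
    have hzc := (tangentCone_char hrep hp) ▸ hz
    rw [mem_rep hrep]
    intro i
    by_cases h : lin (ν i) p = c i
    · exact hzc i h
    · have h1 : c i ≤ lin (ν i) p := (mem_rep hrep).1 hp i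
      have h2 : c i < lin (ν i) p := lt_of_le_of_ne h1 (Ne.symm h)
      have hK : (0:ℝ) ≤ ∑ j, |ν i j| := Finset.sum_nonneg fun j _ => abs_nonneg _
      have hmin : s.min' hsne ≤ εf i :=
        Finset.min'_le _ _ (Finset.mem_insert_of_mem (Finset.mem_image_of_mem εf
          (Finset.mem_univ i)))
      have hεi : εf i = (lin (ν i) p - c i) / ((∑ j, |ν i j|) + 1) := by rw [hεf]; simp [h]
      have hb : |lin (ν i) z - lin (ν i) p| ≤ (∑ j, |ν i j|) * dist z p := lin_dist_le _ _ _
      have hd : dist z p ≤ (lin (ν i) p - c i) / ((∑ j, |ν i j|) + 1) := by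
        calc dist z p ≤ s.min' hsne := hdist
          _ ≤ εf i := hmin
          _ = _ := hεi
      have hKd : (∑ j, |ν i j|) * dist z p ≤ lin (ν i) p - c i := by
        have h3 : (0:ℝ) < (∑ j, |ν i j|) + 1 := by linarith
        have := mul_le_mul_of_nonneg_left hd hK
        have h4 : (∑ j, |ν i j|) * ((lin (ν i) p - c i) / ((∑ j, |ν i j|) + 1)) ≤
            lin (ν i) p - c i := by
          rw [mul_div_assoc']
          rw [div_le_iff₀ h3]
          nlinarith
        linarith
      have := abs_le.1 hb
      linarith [this.1]

lemma dist_affine (p x y : Fin n → ℝ) (t : ℝ) :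
    dist (p + t • (x - p)) (p + t • (y - p)) = |t| * dist x y := by
  have h : (p + t • (x - p)) - (p + t • (y - p)) = t • (x - y) := by module
  rw [dist_eq_norm, h, norm_smul, Real.norm_eq_abs, ← dist_eq_norm]

lemma scaled_mono (hconv : Convex ℝ P) {p : Fin n → ℝ} (hp : p ∈ P) {m m' : ℕ} (h : m ≤ m') :
    (fun x => p + (m:ℝ) • (x - p)) '' P ⊆ (fun x => p + (m':ℝ) • (x - p)) '' P := by
  rintro _ ⟨w, hw, rfl⟩
  rcases Nat.eq_zero_or_pos m' with rfl | hm'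
  · have : m = 0 := Nat.le_zero.1 h
    subst this
    exact ⟨w, hw, rfl⟩
  · have hm'R : (0:ℝ) < (m':ℝ) := by exact_mod_cast hm'
    set t : ℝ := (m:ℝ) / (m':ℝ) with ht
    have ht0 : 0 ≤ t := by positivity
    have ht1 : t ≤ 1 := by
      rw [ht, div_le_one hm'R]; exact_mod_cast h
    have hu : (1 - t) • p + t • w ∈ P := hconv hp hw (by linarith) ht0 (by ring)
    refine ⟨(1 - t) • p + t • w, hu, ?_⟩
    have : (m':ℝ) * t = m := by rw [ht]; field_simp
    simp only
    rw [show ((1 - t) • p + t • w) - p = t • (w - p) by module, smul_smul, this]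

lemma retr_of_inj {S : Set (Fin n → ℝ)} (h : IsInjectiveSubset S) :
    ∃ r : (Fin n → ℝ) → (Fin n → ℝ), LipschitzWith 1 r ∧ (∀ x, r x ∈ S) ∧ ∀ x ∈ S, r x = x := by
  obtain ⟨g, hg, hgi⟩ := h S (Fin n → ℝ) Subtype.val id isometry_subtype_coe LipschitzWith.id
  refine ⟨fun x => (g x).val, ?_, fun x => (g x).2, fun x hx => ?_⟩
  · have := isometry_subtype_coe.lipschitz.comp hg
    simp only [mul_one] at this; exact this
  · have := hgi ⟨x, hx⟩
    simpa using congrArg Subtype.val this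

lemma inj_of_retr {S : Set (Fin n → ℝ)} (r : (Fin n → ℝ) → (Fin n → ℝ))
    (hr : LipschitzWith 1 r) (hmem : ∀ x, r x ∈ S) (hid : ∀ x ∈ S, r x = x) :
    IsInjectiveSubset S := by
  intro A B _ _ i f hi hf
  classical
  set F : B → (Fin n → ℝ) := fun b =>
    if h : ∃ a, i a = b then (f (Classical.choose h)).val else 0 with hF
  have hFi : ∀ a, F (i a) = (f a).val := by
    intro a
    have hex : ∃ a', i a' = i a := ⟨a, rfl⟩
    have hch : i (Classical.choose hex) = i a := Classical.choose_spec hex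
    have : f (Classical.choose hex) = f a := by
      have h1 := hf.dist_le_mul (Classical.choose hex) a
      rw [← hi.dist_eq, hch] at h1
      simp only [dist_self, NNReal.coe_one, one_mul] at h1
      have h2 : dist (f (Classical.choose hex)) (f a) = 0 := le_antisymm h1 dist_nonneg
      exact dist_eq_zero.1 h2
    rw [hF]
    simp only [dif_pos hex]
    rw [this]
  have hFLip : LipschitzOnWith 1 F (Set.range i) := by
    refine LipschitzOnWith.of_dist_le_mul fun b hb b' hb' => ?_
    rcases hb with ⟨a, rfl⟩
    rcases hb' with ⟨a', rfl⟩
    rw [hFi a, hFi a', ← Subtype.dist_eq, hi.dist_eq a a']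
    simpa using hf.dist_le_mul a a'
  obtain ⟨G, hG, hGF⟩ := hFLip.extend_pi
  refine ⟨fun b => ⟨r (G b), hmem _⟩, ?_, fun a => ?_⟩
  · refine LipschitzWith.of_dist_le_mul fun b b' => ?_
    rw [Subtype.dist_eq]
    simp only [NNReal.coe_one, one_mul]
    calc dist (r (G b)) (r (G b')) ≤ dist (G b) (G b') := by simpa using hr.dist_le_mul _ _
      _ ≤ dist b b' := by simpa using hG.dist_le_mul b b'
  · have h1 : G (i a) = (f a).val := by
      rw [← hGF ⟨a, rfl⟩, hFi a]
    apply Subtype.ext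
    simp only [h1]
    exact hid _ (f a).2

end IP

namespace IP

variable {n : ℕ} {ι : Type} [Fintype ι] {ν : ι → Fin n → ℝ} {c : ι → ℝ}
  {P : Set (Fin n → ℝ)}

/-- transfer a retraction onto `P` to a retraction onto a tangent cone of `P` -/
lemma retr_tangentCone (hrep : P = ⋂ i, {x | c i ≤ lin (ν i) x}) {p : Fin n → ℝ} (hp : p ∈ P)
    (r : (Fin n → ℝ) → (Fin n → ℝ)) (hr : LipschitzWith 1 r) (hmem : ∀ x, r x ∈ P)
    (hid : ∀ x ∈ P, r x = x) :
    ∃ s : (Fin n → ℝ) → (Fin n → ℝ), LipschitzWith 1 s ∧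
      (∀ x, s x ∈ tangentCone P p) ∧ ∀ x ∈ tangentCone P p, s x = x := by
  classical
  set τ : ℕ → (Fin n → ℝ) → (Fin n → ℝ) :=
    fun m x => p + (1 / ((m:ℝ) + 1)) • (x - p) with hτ
  set sm : ℕ → (Fin n → ℝ) → (Fin n → ℝ) :=
    fun m x => p + ((m:ℝ) + 1) • (r (τ m x) - p) with hsm
  have hm1 : ∀ m : ℕ, (0:ℝ) < (m:ℝ) + 1 := fun m => by positivity
  have hsmem : ∀ m x, sm m x ∈ tangentCone P p := by
    intro m x
    refine mem_tangentCone_iff.2 ⟨m + 1, r (τ m x), hmem _, ?_⟩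
    rw [hsm]
    push_cast
    ring_nf
  have hsdist : ∀ m x y, dist (sm m x) (sm m y) ≤ dist x y := by
    intro m x y
    have h1 : dist (sm m x) (sm m y) = ((m:ℝ)+1) * dist (r (τ m x)) (r (τ m y)) := by
      rw [hsm]
      simp only
      have := dist_affine p (r (τ m x)) (r (τ m y)) ((m:ℝ)+1)
      rw [abs_of_pos (hm1 m)] at this
      exact this
    have h2 : dist (r (τ m x)) (r (τ m y)) ≤ dist (τ m x) (τ m y) := by
      simpa using hr.dist_le_mul _ _
    have h3 : dist (τ m x) (τ m y) = (1/((m:ℝ)+1)) * dist x y := by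
      rw [hτ]
      simp only
      have := dist_affine p x y (1/((m:ℝ)+1))
      rw [abs_of_pos (by positivity)] at this
      exact this
    rw [h1]
    calc ((m:ℝ)+1) * dist (r (τ m x)) (r (τ m y)) ≤ ((m:ℝ)+1) * ((1/((m:ℝ)+1)) * dist x y) := by
          rw [← h3]
          exact mul_le_mul_of_nonneg_left h2 (le_of_lt (hm1 m))
      _ = dist x y := by field_simp
  have hsfix : ∀ x ∈ tangentCone P p, ∀ᶠ m in Filter.atTop, sm m x = x := by
    intro x hx
    rcases mem_tangentCone_iff.1 hx with ⟨k, w, hw, rfl⟩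
    rw [Filter.eventually_atTop]
    refine ⟨k, fun m hm => ?_⟩
    have hsub := scaled_mono (convex_rep hrep) hp (Nat.le_succ_of_le hm)
    have hx' : p + (k:ℝ) • (w - p) ∈ (fun x => p + ((m+1:ℕ):ℝ) • (x - p)) '' P :=
      hsub ⟨w, hw, rfl⟩
    rcases hx' with ⟨u, hu, heq⟩
    have hτx : τ m (p + (k:ℝ) • (w - p)) = u := by
      rw [← heq, hτ]
      simp only
      have : (p + ((m+1:ℕ):ℝ) • (u - p)) - p = ((m+1:ℕ):ℝ) • (u - p) := by module
      rw [this, smul_smul]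
      have hne : ((m:ℝ)+1) ≠ 0 := ne_of_gt (hm1 m)
      push_cast
      rw [one_div_mul_cancel (by push_cast at hne ⊢; exact hne)]
      module
    rw [hsm]
    simp only
    rw [hτx, hid u hu, ← heq]
    push_cast
    module
  -- ultrafilter limit
  set U : Ultrafilter ℕ := Ultrafilter.of Filter.atTop with hUdef
  have hUle : (U : Filter ℕ) ≤ Filter.atTop := Ultrafilter.of_le _
  have hKcpt : ∀ x : Fin n → ℝ, IsCompact (closedBall x (2 * dist x p)) := fun x =>
    isCompact_closedBall _ _
  have hsball : ∀ m x, sm m x ∈ closedBall x (2 * dist x p) := by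
    intro m x
    have hfixp : sm m p = p := by
      rw [hsm]
      simp only
      have hτp : τ m p = p := by rw [hτ]; simp
      rw [hτp, hid p hp]
      simp
    have := hsdist m x p
    rw [hfixp] at this
    rw [mem_closedBall]
    calc dist (sm m x) x ≤ dist (sm m x) p + dist p x := dist_triangle _ _ _
      _ ≤ dist x p + dist p x := by linarith
      _ = 2 * dist x p := by rw [dist_comm p x]; ring
  have hlim : ∀ x : Fin n → ℝ, ∃ a, Filter.Tendsto (fun m => sm m x) (U : Filter ℕ) (𝓝 a) := by
    intro x
    have h1 : (Ultrafilter.map (fun m => sm m x) U : Filter (Fin n → ℝ)) ≤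
        Filter.principal (closedBall x (2 * dist x p)) := by
      rw [Filter.le_principal_iff]
      exact Filter.mem_map.2 (Filter.univ_mem' fun m => hsball m x)
    obtain ⟨a, _, ha⟩ := (hKcpt x).ultrafilter_le_nhds _ h1
    exact ⟨a, ha⟩
  choose s hs using hlim
  have hclosed : IsClosed (tangentCone P p) := isClosed_tangentCone hrep hp
  refine ⟨s, ?_, ?_, ?_⟩
  · refine LipschitzWith.of_dist_le_mul fun x y => ?_
    simp only [NNReal.coe_one, one_mul]
    have htd : Filter.Tendsto (fun m => dist (sm m x) (sm m y)) (U : Filter ℕ)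
        (𝓝 (dist (s x) (s y))) := (hs x).dist (hs y)
    exact le_of_tendsto htd (Filter.Eventually.of_forall fun m => hsdist m x y)
  · intro x
    exact hclosed.mem_of_tendsto (hs x) (Filter.Eventually.of_forall fun m => hsmem m x)
  · intro x hx
    have hev : ∀ᶠ m in (U : Filter ℕ), sm m x = x := hUle (hsfix x hx)
    have : Filter.Tendsto (fun m => sm m x) (U : Filter ℕ) (𝓝 x) :=
      Filter.Tendsto.congr' (hev.mono fun m hm => hm.symm) tendsto_const_nhds
    exact tendsto_nhds_unique (hs x) this

/-- if `T_q ⊆ T_x` then the tangent cone of `T_q` at `x` equals `T_x` -/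
lemma tangentCone_tangentCone (hrep : P = ⋂ i, {x | c i ≤ lin (ν i) x})
    {q x : Fin n → ℝ} (hq : q ∈ P) (hx : x ∈ P)
    (hsub : tangentCone P q ⊆ tangentCone P x) :
    tangentCone (tangentCone P q) x = tangentCone P x := by
  classical
  letI : Fintype {i : ι // lin (ν i) q = c i} := Fintype.ofFinite _
  have hxq : x ∈ tangentCone P q := subset_tangentCone hx
  have hrepq := tangentCone_rep hrep hq
  apply Subset.antisymm
  · rw [tangentCone_char hrepq hxq]
    intro z hz
    rw [tangentCone_char hrep hx]
    intro i hacti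
    -- small positive t with x + t • (z - x) ∈ T_q
    set v : Fin n → ℝ := z - x with hv
    set tf : {i : ι // lin (ν i) q = c i} → ℝ := fun k =>
      if c k.1 < lin (ν k.1) x then (lin (ν k.1) x - c k.1) / (|lin (ν k.1) v| + 1) else 1
     with htf
    have htfpos : ∀ k, 0 < tf k := by
      intro k
      rw [htf]
      simp only
      by_cases h : c k.1 < lin (ν k.1) x
      · rw [if_pos h]
        have : (0:ℝ) < |lin (ν k.1) v| + 1 := by positivity
        exact div_pos (by linarith) this
      · rw [if_neg h]; exact one_pos
    set sfin : Finset ℝ := insert (1:ℝ) (Finset.univ.image tf) with hsfin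
    have hsne : sfin.Nonempty := ⟨1, Finset.mem_insert_self _ _⟩
    set t : ℝ := sfin.min' hsne with htdef
    have ht0 : 0 < t := by
      refine (Finset.lt_min'_iff _ _).2 fun y hy => ?_
      rcases Finset.mem_insert.1 hy with rfl | hy
      · exact one_pos
      · rcases Finset.mem_image.1 hy with ⟨k, _, rfl⟩
        exact htfpos k
    have htle : ∀ k, t ≤ tf k := fun k =>
      Finset.min'_le _ _ (Finset.mem_insert_of_mem (Finset.mem_image_of_mem tf
        (Finset.mem_univ k)))
    have hmemq : x + t • v ∈ tangentCone P q := by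
      rw [hrepq, Set.mem_iInter]
      intro k
      have hlin : lin (ν k.1) (x + t • v) = lin (ν k.1) x + t * lin (ν k.1) v := by
        rw [lin_add, lin_smul]
      have hxk : c k.1 ≤ lin (ν k.1) x := by
        have := hrepq ▸ hxq
        rw [Set.mem_iInter] at this
        exact this k
      rcases eq_or_lt_of_le hxk with hactk | hinak
      · have hzk : c k.1 ≤ lin (ν k.1) z := hz k hactk.symm
        have hvk : 0 ≤ lin (ν k.1) v := by
          rw [hv, lin_sub]; linarith
        simp only [Set.mem_setOf_eq]
        rw [hlin, ← hactk]
        nlinarith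
      · have h1 : t ≤ (lin (ν k.1) x - c k.1) / (|lin (ν k.1) v| + 1) := by
          have := htle k
          rw [htf] at this
          simp only [if_pos hinak] at this
          exact this
        have h2 : (0:ℝ) < |lin (ν k.1) v| + 1 := by positivity
        have h3 : t * (|lin (ν k.1) v| + 1) ≤ lin (ν k.1) x - c k.1 :=
          (le_div_iff₀ h2).1 h1
        have h4 : |t * lin (ν k.1) v| ≤ t * (|lin (ν k.1) v| + 1) := by
          rw [abs_mul, abs_of_pos ht0]
          nlinarith [abs_nonneg (lin (ν k.1) v)]
        have h5 := (abs_le.1 h4).1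
        simp only [Set.mem_setOf_eq]
        rw [hlin]
        linarith
    have hmemx := hsub hmemq
    rw [tangentCone_char hrep hx] at hmemx
    have h6 : c i ≤ lin (ν i) (x + t • v) := hmemx i hacti
    rw [lin_add, lin_smul, hacti] at h6
    have h7 : 0 ≤ lin (ν i) v := nonneg_of_mul_nonneg_right (by linarith) ht0
    rw [hv, lin_sub] at h7
    linarith
  · exact tangentCone_mono subset_tangentCone

end IP

namespace IP

variable {n : ℕ}

/-- finite hyperconvexity -/
def FinHyper (S : Set (Fin n → ℝ)) : Prop :=
  ∀ (k : ℕ) (x : Fin k → (Fin n → ℝ)) (ρ : Fin k → ℝ), (∀ i, x i ∈ S) →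
    (∀ i j, dist (x i) (x j) ≤ ρ i + ρ j) → ∃ y ∈ S, ∀ i, dist y (x i) ≤ ρ i

/-- hyperconvexity with arbitrary index types -/
def Hyper (S : Set (Fin n → ℝ)) : Prop :=
  ∀ (α : Type) (x : α → (Fin n → ℝ)) (ρ : α → ℝ), (∀ i, x i ∈ S) →
    (∀ i j, dist (x i) (x j) ≤ ρ i + ρ j) → ∃ y ∈ S, ∀ i, dist y (x i) ≤ ρ i

lemma finHyper_of_inj {S : Set (Fin n → ℝ)} (hne : S.Nonempty) (h : IsInjectiveSubset S) :
    FinHyper S := by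
  intro k x ρ hxS hpair
  rcases Nat.eq_zero_or_pos k with rfl | hk
  · exact ⟨hne.choose, hne.choose_spec, fun i => i.elim0⟩
  classical
  have hFne : (Finset.univ : Finset (Fin k)).Nonempty := ⟨⟨0, hk⟩, Finset.mem_univ _⟩
  have hρ : ∀ i, 0 ≤ ρ i := fun i => by have := hpair i i; simp at this; linarith
  set s : Fin k → ℝ := fun i => Finset.univ.inf' hFne (fun j => ρ j + dist (x i) (x j))
    with hsdef
  have hs_le : ∀ i j, s i ≤ ρ j + dist (x i) (x j) := fun i j =>
    Finset.inf'_le _ (Finset.mem_univ j)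
  have hs_min : ∀ i, ∃ j, s i = ρ j + dist (x i) (x j) := by
    intro i
    obtain ⟨j, _, hj⟩ := Finset.exists_mem_eq_inf' hFne (fun j => ρ j + dist (x i) (x j))
    exact ⟨j, hj⟩
  have hs_nonneg : ∀ i, 0 ≤ s i := by
    intro i
    rcases hs_min i with ⟨j, hj⟩
    rw [hj]
    exact add_nonneg (hρ j) dist_nonneg
  -- the one-point-extension quasi-metric
  set D : Option (Fin k) → Option (Fin k) → ℝ := fun a b =>
    match a, b with
    | some i, some j => dist (x i) (x j)
    | none, some j => s j
    | some i, none => s i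
    | none, none => 0
    with hD
  have hDself : ∀ a, D a a = 0 := by rintro (_|i) <;> simp [hD]
  have hDsymm : ∀ a b, D a b = D b a := by
    rintro (_|i) (_|j) <;> simp [hD, dist_comm]
  have hDnonneg : ∀ a b, 0 ≤ D a b := by
    rintro (_|i) (_|j) <;> simp [hD, hs_nonneg, dist_nonneg]
  have hDtri : ∀ a b u, D a b ≤ D a u + D u b := by
    have h4 : ∀ (i j : Fin k), s j ≤ s i + dist (x i) (x j) := by
      intro i j
      rcases hs_min i with ⟨l, hl⟩
      calc s j ≤ ρ l + dist (x j) (x l) := hs_le j l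
        _ ≤ ρ l + (dist (x i) (x l) + dist (x i) (x j)) := by
            have := dist_triangle (x j) (x i) (x l)
            rw [dist_comm (x j) (x i)] at this
            linarith
        _ = s i + dist (x i) (x j) := by rw [hl]; ring
    have h7 : ∀ (i j : Fin k), dist (x i) (x j) ≤ s i + s j := by
      intro i j
      rcases hs_min i with ⟨l, hl⟩
      rcases hs_min j with ⟨l', hl'⟩
      calc dist (x i) (x j) ≤ dist (x i) (x l) + dist (x l) (x l') + dist (x l') (x j) :=
            dist_triangle4 _ _ _ _
        _ ≤ dist (x i) (x l) + (ρ l + ρ l') + dist (x l') (x j) := by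
            linarith [hpair l l']
        _ = (ρ l + dist (x i) (x l)) + (ρ l' + dist (x j) (x l')) := by
            rw [dist_comm (x l') (x j)]; ring
        _ = s i + s j := by rw [hl, hl']
    rintro (_|i) (_|j) (_|u)
    · show (0:ℝ) ≤ 0 + 0; norm_num
    · show (0:ℝ) ≤ s u + s u; linarith [hs_nonneg u]
    · show s j ≤ 0 + s j; linarith
    · show s j ≤ s u + dist (x u) (x j); exact h4 u j
    · show s i ≤ s i + 0; linarith
    · show s i ≤ dist (x i) (x u) + s u
      have := h4 u i
      rw [dist_comm (x u) (x i)] at this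
      linarith
    · show dist (x i) (x j) ≤ s i + s j; exact h7 i j
    · show dist (x i) (x j) ≤ dist (x i) (x u) + dist (x u) (x j); exact dist_triangle _ _ _
  -- Kuratowski-style embedding of the one-point extension
  set φ : Option (Fin k) → (Option (Fin k) → ℝ) := fun a b => D a b with hφdef
  have hφ : ∀ a b, dist (φ a) (φ b) = D a b := by
    intro a b
    apply le_antisymm
    · refine (dist_pi_le_iff (hDnonneg a b)).2 fun u => ?_
      rw [Real.dist_eq]
      rw [abs_le]
      constructor
      · have := hDtri b u a
        have h2 := hDsymm a b
        nlinarith [hDtri b u a, hDsymm u a, hDsymm a b]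
      · nlinarith [hDtri a u b, hDsymm u b]
    · have := dist_le_pi_dist (φ a) (φ b) b
      rw [Real.dist_eq] at this
      simp only [hφdef] at this ⊢
      rw [hDself b, sub_zero] at this
      calc D a b ≤ |D a b| := le_abs_self _
        _ ≤ dist (fun b_1 => D a b_1) fun b_1 => D b b_1 := this
  -- set up the extension problem
  set A : Type := ↥(Set.range x) with hA
  set B : Type := ↥(Set.range φ) with hB
  have hidx : ∀ a : A, ∃ i : Fin k, x i = a.val := fun a => a.2
  set idx : A → Fin k := fun a => (hidx a).choose with hidxdef
  have hidxspec : ∀ a : A, x (idx a) = a.val := fun a => (hidx a).choose_spec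
  set i : A → B := fun a => ⟨φ (some (idx a)), Set.mem_range_self _⟩ with hidef
  set f : A → ↥S := fun a => ⟨a.val, by rcases a.2 with ⟨j, hj⟩; rw [← hj]; exact hxS j⟩
    with hfdef
  have hiIso : Isometry i := by
    refine Isometry.of_dist_eq fun a b => ?_
    rw [hidef]
    simp only
    rw [Subtype.dist_eq]
    simp only
    rw [hφ, Subtype.dist_eq, ← hidxspec a, ← hidxspec b]
  have hfLip : LipschitzWith 1 f := by
    refine LipschitzWith.of_dist_le_mul fun a b => ?_
    rw [Subtype.dist_eq, Subtype.dist_eq]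
    simp [hfdef]
  obtain ⟨g, hg, hgi⟩ := h A B i f hiIso hfLip
  set y := (g ⟨φ none, Set.mem_range_self _⟩).val with hy
  refine ⟨y, (g _).2, fun j => ?_⟩
  set a : A := ⟨x j, Set.mem_range_self _⟩ with ha
  have h1 : (f a).val = x j := rfl
  have h2 : dist y (x j) = dist (g ⟨φ none, Set.mem_range_self _⟩) (g (i a)) := by
    rw [hgi a, hy, Subtype.dist_eq, h1]
  have h3 : dist (g ⟨φ none, Set.mem_range_self _⟩) (g (i a)) ≤
      dist (⟨φ none, Set.mem_range_self _⟩ : B) (i a) := by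
    simpa using hg.dist_le_mul _ _
  have h4 : dist (⟨φ none, Set.mem_range_self _⟩ : B) (i a) = s (idx a) := by
    rw [Subtype.dist_eq]
    simp only [hidef]
    rw [hφ]
  have h5 : s (idx a) ≤ ρ j := by
    have := hs_le (idx a) j
    have h6 : x (idx a) = x j := hidxspec a
    rw [h6] at this
    simpa using this
  rw [h2]
  calc dist (g ⟨φ none, Set.mem_range_self _⟩) (g (i a)) ≤ _ := h3
    _ = s (idx a) := h4
    _ ≤ ρ j := h5

end IP

namespace IP

variable {n : ℕ}

lemma hyper_of_finHyper {S : Set (Fin n → ℝ)} (hcl : IsClosed S) (hfh : FinHyper S) :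
    Hyper S := by
  intro α x ρ hxS hpair
  cases isEmpty_or_nonempty α with
  | inl he =>
      obtain ⟨y, hy, -⟩ := hfh 0 (fun i => i.elim0) (fun i => i.elim0)
        (fun i => i.elim0) (fun i => i.elim0)
      exact ⟨y, hy, fun i => (he.false i).elim⟩
  | inr hne =>
      classical
      obtain ⟨i0⟩ := hne
      set Z : Finset α → Set (Fin n → ℝ) := fun F =>
        (S ∩ closedBall (x i0) (ρ i0)) ∩ ⋂ i ∈ F, closedBall (x i) (ρ i) with hZ
      have hZne : ∀ F, (Z F).Nonempty := by
        intro F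
        set L : List α := (insert i0 F).toList with hL
        obtain ⟨y, hyS, hy⟩ := hfh L.length (fun j => x (L.get j)) (fun j => ρ (L.get j))
          (fun j => hxS _) (fun j l => hpair _ _)
        have hmem : ∀ i ∈ insert i0 F, dist y (x i) ≤ ρ i := by
          intro i hi
          have hiL : i ∈ L := by rw [hL]; exact Finset.mem_toList.2 hi
          obtain ⟨j, hj⟩ := List.mem_iff_get.1 hiL
          rw [← hj]
          exact hy j
        refine ⟨y, ⟨⟨hyS, mem_closedBall.2 (hmem i0 (Finset.mem_insert_self _ _))⟩, ?_⟩⟩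
        exact Set.mem_biInter fun i hi =>
          mem_closedBall.2 (hmem i (Finset.mem_insert_of_mem hi))
      have hZcl : ∀ F, IsClosed (Z F) := fun F =>
        (hcl.inter isClosed_closedBall).inter
          (isClosed_biInter fun i _ => isClosed_closedBall)
      have hZcpt : ∀ F, IsCompact (Z F) := by
        intro F
        refine (isCompact_closedBall (x i0) (ρ i0)).of_isClosed_subset (hZcl F) ?_
        intro y hy
        exact hy.1.2
      have hdir : Directed (· ⊇ ·) Z := by
        intro F G
        refine ⟨F ∪ G, ?_, ?_⟩
        · intro y hy
          exact ⟨hy.1, Set.mem_biInter fun i hi =>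
            Set.mem_iInter₂.1 hy.2 i (Finset.mem_union_left _ hi)⟩
        · intro y hy
          exact ⟨hy.1, Set.mem_biInter fun i hi =>
            Set.mem_iInter₂.1 hy.2 i (Finset.mem_union_right _ hi)⟩
      obtain ⟨y, hy⟩ :=
        IsCompact.nonempty_iInter_of_directed_nonempty_isCompact_isClosed Z hdir hZne hZcpt hZcl
      rw [Set.mem_iInter] at hy
      refine ⟨y, (hy ∅).1.1, fun i => ?_⟩
      have := (hy {i}).2
      have h2 := Set.mem_iInter₂.1 this i (Finset.mem_singleton_self i)
      exact mem_closedBall.2 h2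

open scoped Classical in
/-- recursive 1-Lipschitz extension of the identity along a sequence -/
noncomputable def hypExt (S : Set (Fin n → ℝ)) (b : ℕ → (Fin n → ℝ)) : ℕ → (Fin n → ℝ)
  | k =>
    if h : ∃ y, y ∈ S ∧ (∀ z ∈ S, dist y z ≤ dist (b k) z) ∧
        ∀ j : Fin k, dist y (hypExt S b j.1) ≤ dist (b k) (b j.1) then
      h.choose
    else 0
  termination_by k => k
  decreasing_by all_goals exact j.2

lemma hypExt_spec {S : Set (Fin n → ℝ)} (hh : Hyper S) (b : ℕ → (Fin n → ℝ)) :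
    ∀ k, hypExt S b k ∈ S ∧ (∀ z ∈ S, dist (hypExt S b k) z ≤ dist (b k) z) ∧
      ∀ j, j < k → dist (hypExt S b k) (hypExt S b j) ≤ dist (b k) (b j) := by
  intro k
  induction k using Nat.strong_induction_on with
  | _ k ih =>
    set X : ↥S ⊕ Fin k → (Fin n → ℝ) := fun i =>
      match i with
      | .inl z => z.val
      | .inr j => hypExt S b j.1
      with hX
    set R : ↥S ⊕ Fin k → ℝ := fun i =>
      match i with
      | .inl z => dist (b k) z.val
      | .inr j => dist (b k) (b j.1)
      with hR
    have hmemX : ∀ i, X i ∈ S := by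
      rintro (z | j)
      · exact z.2
      · exact (ih j.1 j.2).1
    have hpairX : ∀ i j, dist (X i) (X j) ≤ R i + R j := by
      rintro (z | j) (w | l)
      · exact dist_triangle_left _ _ _
      · show dist (z.val : Fin n → ℝ) (hypExt S b l.1) ≤
          dist (b k) z.val + dist (b k) (b l.1)
        have h1 : dist (hypExt S b l.1) (z.val : Fin n → ℝ) ≤ dist (b l.1) z.val :=
          (ih l.1 l.2).2.1 z.val z.2
        have h2 : dist (b l.1) (z.val : Fin n → ℝ) ≤
            dist (b k) (b l.1) + dist (b k) z.val := dist_triangle_left _ _ _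
        rw [dist_comm]
        linarith
      · show dist (hypExt S b j.1) (w.val : Fin n → ℝ) ≤
          dist (b k) (b j.1) + dist (b k) w.val
        have h1 : dist (hypExt S b j.1) (w.val : Fin n → ℝ) ≤ dist (b j.1) w.val :=
          (ih j.1 j.2).2.1 w.val w.2
        have h2 : dist (b j.1) (w.val : Fin n → ℝ) ≤
            dist (b k) (b j.1) + dist (b k) w.val := dist_triangle_left _ _ _
        linarith
      · show dist (hypExt S b j.1) (hypExt S b l.1) ≤
          dist (b k) (b j.1) + dist (b k) (b l.1)
        have h2 : dist (b j.1) (b l.1) ≤ dist (b k) (b j.1) + dist (b k) (b l.1) :=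
          dist_triangle_left _ _ _
        rcases lt_trichotomy j.1 l.1 with hjl | hjl | hjl
        · have h1 := (ih l.1 l.2).2.2 j.1 hjl
          have h1' : dist (hypExt S b j.1) (hypExt S b l.1) ≤ dist (b j.1) (b l.1) := by
            rw [dist_comm (hypExt S b j.1) (hypExt S b l.1),
              dist_comm (b j.1) (b l.1)]
            exact h1
          linarith
        · rw [hjl]
          simp only [dist_self]
          positivity
        · have h1 := (ih j.1 j.2).2.2 l.1 hjl
          linarith
    obtain ⟨y, hyS, hy⟩ := hh (↥S ⊕ Fin k) X R hmemX hpairX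
    have hex : ∃ y, y ∈ S ∧ (∀ z ∈ S, dist y z ≤ dist (b k) z) ∧
        ∀ j : Fin k, dist y (hypExt S b j.1) ≤ dist (b k) (b j.1) :=
      ⟨y, hyS, fun z hz => hy (Sum.inl ⟨z, hz⟩), fun j => hy (Sum.inr j)⟩
    have heq : hypExt S b k = hex.choose := by
      rw [hypExt]
      rw [dif_pos hex]
    rw [heq]
    obtain ⟨h1, h2, h3⟩ := hex.choose_spec
    exact ⟨h1, h2, fun j hj => h3 ⟨j, hj⟩⟩

lemma retr_of_hyper {S : Set (Fin n → ℝ)} (hcl : IsClosed S) (hh : Hyper S) :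
    ∃ r : (Fin n → ℝ) → (Fin n → ℝ), LipschitzWith 1 r ∧ (∀ x, r x ∈ S) ∧ ∀ x ∈ S, r x = x := by
  obtain ⟨b, hb⟩ := TopologicalSpace.exists_dense_seq (Fin n → ℝ)
  set g : ℕ → (Fin n → ℝ) := hypExt S b with hg
  have hgspec := hypExt_spec hh b
  have hJ : ∀ (x : Fin n → ℝ) (m : ℕ), ∃ j, dist x (b j) < 1 / ((m:ℝ) + 1) := by
    intro x m
    have hx : x ∈ closure (Set.range b) := by
      rw [hb.closure_range]; trivial
    rw [Metric.mem_closure_iff] at hx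
    obtain ⟨z, ⟨j, rfl⟩, hz⟩ := hx (1 / ((m:ℝ)+1)) (by positivity)
    exact ⟨j, hz⟩
  choose J hJspec using hJ
  have hcauchy : ∀ x : Fin n → ℝ, ∃ L, Filter.Tendsto (fun m => g (J x m)) Filter.atTop (𝓝 L) := by
    intro x
    have : CauchySeq (fun m => g (J x m)) := by
      refine cauchySeq_of_le_tendsto_0 (fun N => 2 / ((N:ℝ) + 1)) (fun p q N hp hq => ?_) ?_
      · calc dist (g (J x p)) (g (J x q)) ≤ dist (b (J x p)) (b (J x q)) := by
              rcases lt_trichotomy (J x p) (J x q) with h | h | h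
              · rw [dist_comm, dist_comm (b (J x p)) (b (J x q))]
                exact (hgspec (J x q)).2.2 _ h
              · rw [h]; simp
              · exact (hgspec (J x p)).2.2 _ h
          _ ≤ dist (b (J x p)) x + dist x (b (J x q)) := dist_triangle _ _ _
          _ ≤ 1 / ((p:ℝ)+1) + 1 / ((q:ℝ)+1) := by
              have h1 := hJspec x p
              have h2 := hJspec x q
              rw [dist_comm (b (J x p)) x]
              linarith
          _ ≤ 1 / ((N:ℝ)+1) + 1 / ((N:ℝ)+1) := by
              have hpc : ((N:ℝ)+1) ≤ ((p:ℝ)+1) := by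
                have := (Nat.cast_le (α := ℝ)).2 hp; linarith
              have hqc : ((N:ℝ)+1) ≤ ((q:ℝ)+1) := by
                have := (Nat.cast_le (α := ℝ)).2 hq; linarith
              have hNpos : (0:ℝ) < (N:ℝ)+1 := by positivity
              exact add_le_add (one_div_le_one_div_of_le hNpos hpc)
                (one_div_le_one_div_of_le hNpos hqc)
          _ = 2 / ((N:ℝ)+1) := by ring
      · have h0 : Filter.Tendsto (fun N : ℕ => 1 / ((N:ℝ) + 1)) Filter.atTop (𝓝 0) :=
          tendsto_one_div_add_atTop_nhds_zero_nat
        have := h0.const_mul (2:ℝ)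
        simp only [mul_zero] at this
        convert this using 2 with N
        ring
    exact cauchySeq_tendsto_of_complete this
  choose r hr using hcauchy
  have hrS : ∀ x, r x ∈ S :=
    fun x => hcl.mem_of_tendsto (hr x) (Filter.Eventually.of_forall fun m => (hgspec _).1)
  refine ⟨r, ?_, hrS, ?_⟩
  · refine LipschitzWith.of_dist_le_mul fun x y => ?_
    simp only [NNReal.coe_one, one_mul]
    have htf : Filter.Tendsto (fun m => dist (g (J x m)) (g (J y m))) Filter.atTop
        (𝓝 (dist (r x) (r y))) := (hr x).dist (hr y)
    have hth : Filter.Tendsto (fun m : ℕ => dist x y + (1 / ((m:ℝ)+1) + 1 / ((m:ℝ)+1)))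
        Filter.atTop (𝓝 (dist x y)) := by
      have h0 : Filter.Tendsto (fun N : ℕ => 1 / ((N:ℝ) + 1)) Filter.atTop (𝓝 0) :=
        tendsto_one_div_add_atTop_nhds_zero_nat
      have := (h0.add h0).const_add (dist x y)
      simpa using this
    refine le_of_tendsto_of_tendsto' htf hth fun m => ?_
    calc dist (g (J x m)) (g (J y m)) ≤ dist (b (J x m)) (b (J y m)) := by
          rcases lt_trichotomy (J x m) (J y m) with h | h | h
          · rw [dist_comm, dist_comm (b (J x m)) (b (J y m))]
            exact (hgspec (J y m)).2.2 _ h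
          · rw [h]; simp
          · exact (hgspec (J x m)).2.2 _ h
      _ ≤ dist (b (J x m)) x + dist x y + dist y (b (J y m)) := dist_triangle4 _ _ _ _
      _ ≤ dist x y + (1 / ((m:ℝ)+1) + 1 / ((m:ℝ)+1)) := by
          have h1 := hJspec x m
          have h2 := hJspec y m
          have h1' : dist (b (J x m)) x < 1 / ((m:ℝ)+1) := by
            rw [dist_comm (b (J x m)) x]; exact h1
          linarith
  · intro x hx
    have hgx : Filter.Tendsto (fun m => g (J x m)) Filter.atTop (𝓝 x) := by
      rw [tendsto_iff_dist_tendsto_zero]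
      have hb0 : Filter.Tendsto (fun m : ℕ => 1 / ((m:ℝ)+1)) Filter.atTop (𝓝 0) :=
        tendsto_one_div_add_atTop_nhds_zero_nat
      refine squeeze_zero (fun m => dist_nonneg) (fun m => ?_) hb0
      calc dist (g (J x m)) x ≤ dist (b (J x m)) x := (hgspec _).2.1 x hx
        _ ≤ 1 / ((m:ℝ)+1) := by
            have := hJspec x m
            rw [dist_comm]
            linarith
    exact tendsto_nhds_unique (hr x) hgx

end IP

namespace IP

variable {n : ℕ} {ι : Type} [Fintype ι] {ν : ι → Fin n → ℝ} {c : ι → ℝ}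
  {P : Set (Fin n → ℝ)}

lemma finHyper_of_cones (hrep : P = ⋂ i, {x | c i ≤ lin (ν i) x}) (hne : P.Nonempty)
    (hcone : ∀ x ∈ P, FinHyper (tangentCone P x)) : FinHyper P := by
  intro k x ρ hxS hpair
  rcases Nat.eq_zero_or_pos k with rfl | hk
  · exact ⟨hne.choose, hne.choose_spec, fun i => i.elim0⟩
  classical
  have hFne : (Finset.univ : Finset (Fin k)).Nonempty := ⟨⟨0, hk⟩, Finset.mem_univ _⟩
  set i0 : Fin k := ⟨0, hk⟩ with hi0
  have hρ0 : ∀ i, 0 ≤ ρ i := fun i => by have := hpair i i; simp at this; linarith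
  set f : (Fin n → ℝ) → ℝ := fun y => Finset.univ.sup' hFne (fun i => dist y (x i) - ρ i)
    with hf
  have hf_ge : ∀ y i, dist y (x i) - ρ i ≤ f y := fun y i => by
    rw [hf]
    exact Finset.le_sup' (fun i => dist y (x i) - ρ i) (Finset.mem_univ i)
  have hf_le : ∀ y t, (∀ i, dist y (x i) - ρ i ≤ t) → f y ≤ t := fun y t h =>
    Finset.sup'_le _ _ fun i _ => h i
  have hfLip : ∀ y y', f y ≤ f y' + dist y y' := by
    intro y y'
    refine hf_le y _ fun i => ?_
    have h1 : dist y (x i) ≤ dist y y' + dist y' (x i) := dist_triangle _ _ _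
    have h2 := hf_ge y' i
    linarith
  have hfCont : Continuous f := by
    have : LipschitzWith 1 f := by
      refine LipschitzWith.of_dist_le_mul fun y y' => ?_
      rw [Real.dist_eq, abs_le]
      constructor
      · have := hfLip y' y
        rw [dist_comm y' y] at this
        simp only [NNReal.coe_one, one_mul]
        linarith
      · have := hfLip y y'
        simp only [NNReal.coe_one, one_mul]
        linarith
    exact this.continuous
  have hfx0 : f (x i0) ≤ ρ i0 := hf_le _ _ fun i => by have := hpair i0 i; linarith
  set K : Set (Fin n → ℝ) := P ∩ closedBall (x i0) (2 * ρ i0 + 1) with hK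
  have hKcl : IsClosed K := (isClosed_rep hrep).inter isClosed_closedBall
  have hKcpt : IsCompact K :=
    (isCompact_closedBall (x i0) (2 * ρ i0 + 1)).of_isClosed_subset hKcl fun y hy => hy.2
  have hKne : (x i0) ∈ K := by
    refine ⟨hxS i0, mem_closedBall.2 ?_⟩
    rw [dist_self]
    have := hρ0 i0
    linarith
  obtain ⟨ystar, hystarK, hystarmin⟩ := hKcpt.exists_isMinOn ⟨x i0, hKne⟩ hfCont.continuousOn
  set tstar : ℝ := f ystar with htstar
  have hystarP : ystar ∈ P := hystarK.1
  have htstar_le : tstar ≤ f (x i0) := hystarmin hKne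
  have hglobal : ∀ y ∈ P, tstar ≤ f y := by
    intro y hy
    by_cases hyK : y ∈ K
    · exact hystarmin hyK
    · have hball : ¬ dist y (x i0) ≤ 2 * ρ i0 + 1 := fun hcon => hyK ⟨hy, mem_closedBall.2 hcon⟩
      push_neg at hball
      have h1 := hf_ge y i0
      have h2 := hρ0 i0
      linarith
  by_cases ht : tstar ≤ 0
  · refine ⟨ystar, hystarP, fun i => ?_⟩
    have := hf_ge ystar i
    linarith
  · exfalso
    push_neg at ht
    obtain ⟨ε0, hε0pos, hε0⟩ := exists_eps_tangentCone_subset hrep hystarP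
    set ε : ℝ := min tstar ε0 with hε
    have hεpos : 0 < ε := lt_min ht hε0pos
    have hεt : ε ≤ tstar := min_le_left _ _
    have hεe : ε ≤ ε0 := min_le_right _ _
    set T : Set (Fin n → ℝ) := tangentCone P ystar with hT
    have hTFH : FinHyper T := hcone ystar hystarP
    set xx : Fin (k+1) → (Fin n → ℝ) := Fin.cons ystar x with hxx
    set rr : Fin (k+1) → ℝ := Fin.cons ε (fun i => ρ i + tstar - ε) with hrr
    have hmemT : ∀ i, xx i ∈ T := by
      intro i
      refine Fin.cases ?_ ?_ i
      · rw [hxx]; simp only [Fin.cons_zero]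
        exact mem_tangentCone_self hystarP
      · intro j
        rw [hxx]; simp only [Fin.cons_succ]
        exact subset_tangentCone (hxS j)
    have hpairT : ∀ i j, dist (xx i) (xx j) ≤ rr i + rr j := by
      intro i j
      refine Fin.cases ?_ ?_ i
      · refine Fin.cases ?_ ?_ j
        · simp [hxx, hrr]
          positivity
        · intro l
          simp only [hxx, hrr, Fin.cons_zero, Fin.cons_succ]
          have := hf_ge ystar l
          have h2 : f ystar = tstar := rfl
          linarith [hf_ge ystar l]
      · intro l
        refine Fin.cases ?_ ?_ j
        · simp only [hxx, hrr, Fin.cons_zero, Fin.cons_succ]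
          rw [dist_comm]
          have := hf_ge ystar l
          linarith
        · intro l'
          simp only [hxx, hrr, Fin.cons_succ]
          have := hpair l l'
          linarith
    obtain ⟨y', hy'T, hy'⟩ := hTFH (k+1) xx rr hmemT hpairT
    have hy'0 : dist y' ystar ≤ ε := by
      have := hy' 0
      simpa [hxx, hrr] using this
    have hy'P : y' ∈ P := hε0 y' hy'T (le_trans hy'0 hεe)
    have hy'f : f y' ≤ tstar - ε := by
      refine hf_le _ _ fun i => ?_
      have := hy' i.succ
      simp only [hxx, hrr, Fin.cons_succ] at this
      linarith
    have := hglobal y' hy'P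
    linarith

lemma exists_minimal_cone (hrep : P = ⋂ i, {x | c i ≤ lin (ν i) x}) {x : Fin n → ℝ}
    (hx : x ∈ P) :
    ∃ q ∈ P, tangentCone P q ⊆ tangentCone P x ∧
      ∀ r ∈ P, tangentCone P r ⊆ tangentCone P q → tangentCone P r = tangentCone P q := by
  classical
  set F : Set ι → Set (Fin n → ℝ) := fun A => {z | ∀ i ∈ A, c i ≤ lin (ν i) z} with hF
  set 𝒮 : Set (Set (Fin n → ℝ)) :=
    {C | ∃ q ∈ P, C = tangentCone P q ∧ C ⊆ tangentCone P x} with h𝒮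
  have hchar : ∀ q ∈ P, tangentCone P q = F {i | lin (ν i) q = c i} := by
    intro q hq
    rw [tangentCone_char hrep hq]
    rfl
  have hfin : 𝒮.Finite := by
    refine Set.Finite.subset (Set.finite_range F) ?_
    rintro C ⟨q, hq, rfl, -⟩
    exact ⟨{i | lin (ν i) q = c i}, (hchar q hq).symm⟩
  have hne𝒮 : 𝒮.Nonempty := ⟨tangentCone P x, x, hx, rfl, le_refl _⟩
  obtain ⟨C, hC, hCmin⟩ := Set.Finite.exists_minimalFor id 𝒮 hfin hne𝒮
  obtain ⟨q, hq, rfl, hsub⟩ := hC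
  refine ⟨q, hq, hsub, fun r hr hrq => ?_⟩
  have hr𝒮 : tangentCone P r ∈ 𝒮 := ⟨r, hr, rfl, le_trans hrq hsub⟩
  exact Set.Subset.antisymm hrq (hCmin hr𝒮 hrq)

end IP


/-- A convex polyhedron `P ⊆ l∞ⁿ` with nonempty interior is injective iff every tangent
cone of `P` that is minimal with respect to inclusion among all tangent cones of `P`
is injective. -/
theorem injective_iff_minimal_tangentCones {n : ℕ} (P : Set (Fin n → ℝ))
    (hP : IsConvexPolyhedron P) (hint : (interior P).Nonempty) :
    IsInjectiveSubset P ↔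
      ∀ p ∈ P, (∀ q ∈ P, tangentCone P q ⊆ tangentCone P p →
          tangentCone P q = tangentCone P p) →
        IsInjectiveSubset (tangentCone P p) := by
  classical
  obtain ⟨m, ν, c, -, hPeq⟩ := hP
  have hrep : P = ⋂ i, {x | c i ≤ IP.lin (ν i) x} := hPeq
  have hPne : P.Nonempty := by
    obtain ⟨x, hx⟩ := hint
    exact ⟨x, interior_subset hx⟩
  constructor
  · intro hinj p hp _hmin
    obtain ⟨r, hr, hrmem, hrid⟩ := IP.retr_of_inj hinj
    obtain ⟨s, hs, hsmem, hsid⟩ := IP.retr_tangentCone hrep hp r hr hrmem hrid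
    exact IP.inj_of_retr s hs hsmem hsid
  · intro hmin
    have hconeFH : ∀ x ∈ P, IP.FinHyper (tangentCone P x) := by
      intro x hx
      obtain ⟨q, hq, hsub, hqmin⟩ := IP.exists_minimal_cone hrep hx
      have hinjq : IsInjectiveSubset (tangentCone P q) := hmin q hq hqmin
      obtain ⟨r, hr, hrmem, hrid⟩ := IP.retr_of_inj hinjq
      letI : Fintype {i : Fin m // IP.lin (ν i) q = c i} := Fintype.ofFinite _
      have hrepq := IP.tangentCone_rep hrep hq
      have hxq : x ∈ tangentCone P q := IP.subset_tangentCone hx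
      obtain ⟨s, hs, hsmem, hsid⟩ := IP.retr_tangentCone hrepq hxq r hr hrmem hrid
      rw [IP.tangentCone_tangentCone hrep hq hx hsub] at hsmem hsid
      exact IP.finHyper_of_inj ⟨x, IP.mem_tangentCone_self hx⟩
        (IP.inj_of_retr s hs hsmem hsid)
    have hPFH := IP.finHyper_of_cones hrep hPne hconeFH
    have hH := IP.hyper_of_finHyper (IP.isClosed_rep hrep) hPFH
    obtain ⟨r, h1, h2, h3⟩ := IP.retr_of_hyper (IP.isClosed_rep hrep) hH
    exact IP.inj_of_retr r h1 h2 h3
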